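/- Fix d ≥ 1 and r > 0, and work in ℝ^d with the Euclidean norm. Let mean(x) = (1/d)Σ_{i=1}^{d} x_i, c(x) = x − mean(x)·𝟙 where 𝟙 is the all-ones vector, and LN(x) = √d · c(x)/‖c(x)‖₂. Then for all x, y ∈ ℝ^d with ‖c(x)‖₂ ≥ r and ‖c(y)‖₂ ≥ r, ‖LN(x) − LN(y)‖₂ ≤ (2√d / r)·‖x − y‖₂. -/

import Mathlib

/-- The mean of the coordinates of `x ∈ ℝ^d`. -/
noncomputable def vecMean {d : ℕ} (x : EuclideanSpace ℝ (Fin d)) : ℝ :=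
  (1 / (d : ℝ)) * ∑ i, x i

/-- The all-ones vector `𝟙 ∈ ℝ^d`. -/
def allOnes (d : ℕ) : EuclideanSpace ℝ (Fin d) := WithLp.toLp 2 (fun _ => 1)

/-- The centering map `c(x) = x - mean(x) · 𝟙`. -/
noncomputable def centering {d : ℕ} (x : EuclideanSpace ℝ (Fin d)) : EuclideanSpace ℝ (Fin d) :=
  x - vecMean x • allOnes d

/-- Layer normalization: `LN(x) = √d · c(x) / ‖c(x)‖₂`. -/
noncomputable def layerNorm {d : ℕ} (x : EuclideanSpace ℝ (Fin d)) : EuclideanSpace ℝ (Fin d) :=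
  (Real.sqrt d * ‖centering x‖⁻¹) • centering x

lemma sphere_lip {E : Type*} [NormedAddCommGroup E] [NormedSpace ℝ E]
    (r : ℝ) (hr : 0 < r) (u v : E) (hu : r ≤ ‖u‖) (hv : r ≤ ‖v‖) :
    ‖‖u‖⁻¹ • u - ‖v‖⁻¹ • v‖ ≤ (2 / r) * ‖u - v‖ := by
  have hu0 : (0:ℝ) < ‖u‖ := lt_of_lt_of_le hr hu
  have hv0 : (0:ℝ) < ‖v‖ := lt_of_lt_of_le hr hv
  have key : ‖u‖⁻¹ • u - ‖v‖⁻¹ • v = ‖u‖⁻¹ • (u - v) + (‖u‖⁻¹ - ‖v‖⁻¹) • v := by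
    rw [smul_sub, sub_smul]; abel
  rw [key]
  have h1 : ‖‖u‖⁻¹ • (u - v)‖ ≤ ‖u - v‖ / r := by
    rw [norm_smul, Real.norm_eq_abs, abs_inv, abs_of_pos hu0, div_eq_inv_mul]
    gcongr
  have h2 : ‖(‖u‖⁻¹ - ‖v‖⁻¹) • v‖ ≤ ‖u - v‖ / r := by
    rw [norm_smul, Real.norm_eq_abs]
    have : |‖u‖⁻¹ - ‖v‖⁻¹| = |‖v‖ - ‖u‖| / (‖u‖ * ‖v‖) := by
      rw [inv_sub_inv (ne_of_gt hu0) (ne_of_gt hv0), abs_div,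
        abs_of_pos (mul_pos hu0 hv0)]
    rw [this]
    have habs : |‖v‖ - ‖u‖| ≤ ‖u - v‖ := by
      rw [abs_sub_comm]
      exact (abs_norm_sub_norm_le u v)
    calc |‖v‖ - ‖u‖| / (‖u‖ * ‖v‖) * ‖v‖ = |‖v‖ - ‖u‖| / ‖u‖ := by
          field_simp
      _ ≤ ‖u - v‖ / r := by gcongr
  calc ‖‖u‖⁻¹ • (u - v) + (‖u‖⁻¹ - ‖v‖⁻¹) • v‖
      ≤ ‖‖u‖⁻¹ • (u - v)‖ + ‖(‖u‖⁻¹ - ‖v‖⁻¹) • v‖ := norm_add_le _ _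
    _ ≤ ‖u - v‖ / r + ‖u - v‖ / r := add_le_add h1 h2
    _ = (2 / r) * ‖u - v‖ := by ring

lemma centering_sub {d : ℕ} (x y : EuclideanSpace ℝ (Fin d)) :
    centering x - centering y = centering (x - y) := by
  simp only [centering, vecMean]
  have : (fun i => (x - y) i) = fun i => x i - y i := rfl
  rw [show (∑ i, (x - y) i) = ∑ i, x i - ∑ i, y i by
    rw [← Finset.sum_sub_distrib]; rfl]
  ext i
  simp [allOnes, mul_sub, sub_smul]
  ring

lemma centering_norm_le {d : ℕ} (hd : 1 ≤ d) (z : EuclideanSpace ℝ (Fin d)) :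
    ‖centering z‖ ≤ ‖z‖ := by
  have hdpos : (0:ℝ) < d := by exact_mod_cast hd
  have horth : inner ℝ (centering z) ((vecMean z) • allOnes d) = (0:ℝ) := by
    rw [inner_smul_right]
    have : inner ℝ (centering z) (allOnes d) = (0:ℝ) := by
      rw [PiLp.inner_apply]
      simp only [centering, vecMean, allOnes]
      have : ∀ i, (z - ((1 / (d:ℝ)) * ∑ j, z j) • (allOnes d)) i *
          (1:ℝ) = z i - (1 / (d:ℝ)) * ∑ j, z j := by
        intro i; simp [allOnes]
      simp only [RCLike.inner_apply, conj_trivial]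
      rw [Finset.sum_congr rfl (fun i _ => by
        show (1:ℝ) * (z - ((1 / (d:ℝ)) * ∑ j, z j) • (allOnes d)) i = _
        exact (mul_comm _ _).trans (this i))]
      rw [Finset.sum_sub_distrib, Finset.sum_const, Finset.card_univ,
        Fintype.card_fin, nsmul_eq_mul]
      field_simp
      ring
    rw [this, mul_zero]
  have hz : z = centering z + (vecMean z) • allOnes d := by
    simp [centering]
  have : ‖z‖^2 = ‖centering z‖^2 + ‖(vecMean z) • allOnes d‖^2 := by
    conv_lhs => rw [hz]
    rw [norm_add_sq_real, horth]
    ring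
  nlinarith [norm_nonneg (centering z), norm_nonneg z,
    sq_nonneg ‖(vecMean z) • allOnes d‖]

/-- For `d ≥ 1`, `r > 0`, and any `x, y ∈ ℝ^d` with `‖c(x)‖₂ ≥ r` and
`‖c(y)‖₂ ≥ r`, layer normalization satisfies `‖LN(x) - LN(y)‖₂ ≤ (2√d / r) · ‖x - y‖₂`. -/
theorem layerNorm_lipschitz (d : ℕ) (hd : 1 ≤ d) (r : ℝ) (hr : 0 < r)
    (x y : EuclideanSpace ℝ (Fin d))
    (hx : r ≤ ‖centering x‖) (hy : r ≤ ‖centering y‖) :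
    ‖layerNorm x - layerNorm y‖ ≤ (2 * Real.sqrt d / r) * ‖x - y‖ := by
  have hs : (0:ℝ) ≤ Real.sqrt d := Real.sqrt_nonneg d
  have key : layerNorm x - layerNorm y =
      Real.sqrt d • (‖centering x‖⁻¹ • centering x - ‖centering y‖⁻¹ • centering y) := by
    simp [layerNorm, smul_sub, mul_smul]
  rw [key, norm_smul, Real.norm_eq_abs, abs_of_nonneg hs]
  have h1 := sphere_lip r hr (centering x) (centering y) hx hy
  have h2 : ‖centering x - centering y‖ ≤ ‖x - y‖ := by
    rw [centering_sub]; exact centering_norm_le hd _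
  calc Real.sqrt d * ‖‖centering x‖⁻¹ • centering x - ‖centering y‖⁻¹ • centering y‖
      ≤ Real.sqrt d * ((2 / r) * ‖centering x - centering y‖) := by gcongr
    _ ≤ Real.sqrt d * ((2 / r) * ‖x - y‖) := by gcongr
    _ = (2 * Real.sqrt d / r) * ‖x - y‖ := by ring
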